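/- Let l be a prime power, n ≥ 1, and let A, B ⊆ F_l^n \ {0} be arbitrary subsets. Let H ∈ F_l^{n×n} be a uniformly random invertible matrix, and set θ := log_l(|A||B|/n) - n - 1. If θ^{-1} ln θ ≥ l^{-n}|A| (and θ > 1), then P(A ∩ HB = ∅) ≤ (1 + ln θ)/θ, where HB := {Hx : x ∈ B}. -/

import Mathlib

open Finset Submodule
open scoped Classical

set_option linter.unusedSectionVars false
set_option linter.unusedVariables false

private lemma il_exists_equiv_set {F : Type*} [Field F] [Fintype F] {n : ℕ}
    (s t : Set (Fin n → F))
    (hs : LinearIndependent F ((↑) : s → (Fin n → F)))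
    (ht : LinearIndependent F ((↑) : t → (Fin n → F)))
    (e : s ≃ t) :
    ∃ G : (Fin n → F) ≃ₗ[F] (Fin n → F), ∀ x : s, G x = (e x : Fin n → F) := by
  classical
  replace hs : LinearIndepOn F id s := hs
  replace ht : LinearIndepOn F id t := ht
  have hss' : s ⊆ hs.extend (Set.subset_univ s) := hs.subset_extend _
  have htt' : t ⊆ ht.extend (Set.subset_univ t) := ht.subset_extend _
  let Bs := Module.Basis.extend hs
  let Bt := Module.Basis.extend ht
  have hcard : Fintype.card (hs.extend (Set.subset_univ s)) =
      Fintype.card (ht.extend (Set.subset_univ t)) := by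
    rw [← Module.finrank_eq_card_basis Bs, ← Module.finrank_eq_card_basis Bt]
  have h1 : Fintype.card s + Fintype.card ↥(hs.extend (Set.subset_univ s) \ s) =
      Fintype.card (hs.extend (Set.subset_univ s)) := by
    rw [← Fintype.card_sum]; exact Fintype.card_congr (Equiv.Set.sumDiffSubset hss')
  have h2 : Fintype.card t + Fintype.card ↥(ht.extend (Set.subset_univ t) \ t) =
      Fintype.card (ht.extend (Set.subset_univ t)) := by
    rw [← Fintype.card_sum]; exact Fintype.card_congr (Equiv.Set.sumDiffSubset htt')
  have hst : Fintype.card s = Fintype.card t := Fintype.card_congr e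
  have hd : Fintype.card ↥(hs.extend (Set.subset_univ s) \ s) =
      Fintype.card ↥(ht.extend (Set.subset_univ t) \ t) := by omega
  let f := Fintype.equivOfCardEq hd
  let E : ↥(hs.extend (Set.subset_univ s)) ≃ ↥(ht.extend (Set.subset_univ t)) :=
    (Equiv.Set.sumDiffSubset hss').symm.trans ((e.sumCongr f).trans (Equiv.Set.sumDiffSubset htt'))
  refine ⟨Bs.equiv Bt E, fun x => ?_⟩
  have hx : (x : Fin n → F) ∈ hs.extend (Set.subset_univ s) := hss' x.2
  have hE : E ⟨x, hx⟩ = Set.inclusion htt' (e ⟨(x : Fin n → F), x.2⟩) := by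
    show ((Equiv.Set.sumDiffSubset hss').symm.trans
      ((e.sumCongr f).trans (Equiv.Set.sumDiffSubset htt'))) ⟨x, hx⟩ = _
    rw [Equiv.trans_apply, Equiv.Set.sumDiffSubset_symm_apply_of_mem hss' x.2, Equiv.trans_apply,
      Equiv.sumCongr_apply, Sum.map_inl, Equiv.Set.sumDiffSubset_apply_inl]
  have hxx : (x : Fin n → F) = Bs ⟨x, hx⟩ := (Module.Basis.extend_apply_self hs ⟨x, hx⟩).symm
  calc (Bs.equiv Bt E) (x : Fin n → F) = (Bs.equiv Bt E) (Bs ⟨x, hx⟩) := by rw [← hxx]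
    _ = Bt (E ⟨x, hx⟩) := Module.Basis.equiv_apply Bs ⟨x, hx⟩ Bt E
    _ = _ := by rw [hE, Module.Basis.extend_apply_self]

private lemma il_exists_equiv_single {F : Type*} [Field F] [Fintype F] {n : ℕ}
    (x y : Fin n → F) (hx : x ≠ 0) (hy : y ≠ 0) :
    ∃ G : (Fin n → F) ≃ₗ[F] (Fin n → F), G x = y := by
  haveI : Unique ({x} : Set (Fin n → F)) := Set.uniqueSingleton x
  haveI : Unique ({y} : Set (Fin n → F)) := Set.uniqueSingleton y
  obtain ⟨G, hG⟩ := il_exists_equiv_set {x} {y}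
    (LinearIndepOn.singleton (v := id) hx) (LinearIndepOn.singleton (v := id) hy)
    (Equiv.ofUnique _ _)
  refine ⟨G, ?_⟩
  have h := hG ⟨x, rfl⟩
  rw [h]; exact ((Equiv.ofUnique (↥({x}:Set (Fin n → F))) (↥({y}:Set (Fin n → F)))) ⟨x, rfl⟩).2

private lemma il_exists_equiv_pair {F : Type*} [Field F] [Fintype F] {n : ℕ}
    (x x' y y' : Fin n → F) (hx : x ≠ 0) (hx' : x' ∉ Submodule.span F {x})
    (hy : y ≠ 0) (hy' : y' ∉ Submodule.span F {y}) :
    ∃ G : (Fin n → F) ≃ₗ[F] (Fin n → F), G x = y ∧ G x' = y' := by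
  classical
  have hxx' : x ≠ x' := fun h => hx' (h ▸ Submodule.mem_span_singleton_self x)
  have hyy' : y ≠ y' := fun h => hy' (h ▸ Submodule.mem_span_singleton_self y)
  have hsli : LinearIndependent F ((↑) : ↥(insert x' {x} : Set (Fin n → F)) → (Fin n → F)) :=
    (LinearIndepOn.singleton (v := id) hx).id_insert hx'
  have htli : LinearIndependent F ((↑) : ↥(insert y' {y} : Set (Fin n → F)) → (Fin n → F)) :=
    (LinearIndepOn.singleton (v := id) hy).id_insert hy'
  let e : ↥(insert x' {x} : Set (Fin n → F)) ≃ ↥(insert y' {y} : Set (Fin n → F)) :=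
    { toFun := fun u => if (u : Fin n → F) = x' then ⟨y', Or.inl rfl⟩ else ⟨y, Or.inr rfl⟩
      invFun := fun u => if (u : Fin n → F) = y' then ⟨x', Or.inl rfl⟩ else ⟨x, Or.inr rfl⟩
      left_inv := by
        rintro ⟨u, hu | hu⟩ <;> subst hu <;> simp [hxx'.symm, hyy'.symm, hxx', hyy']
      right_inv := by
        rintro ⟨u, hu | hu⟩ <;> subst hu <;> simp [hxx'.symm, hyy'.symm, hxx', hyy'] }
  obtain ⟨G, hG⟩ := il_exists_equiv_set _ _ hsli htli e
  have h1 := hG ⟨x', Or.inl rfl⟩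
  have h2 := hG ⟨x, Or.inr rfl⟩
  simp only [e, Equiv.coe_fn_mk] at h1 h2
  simp only [if_true] at h1
  rw [if_neg hxx'] at h2
  exact ⟨G, h2, h1⟩

section ILAux
variable {F : Type*} [Field F] [Fintype F] {n : ℕ}
  [Fintype ((Fin n → F) ≃ₗ[F] (Fin n → F))]


private lemma il_count_single (b a : Fin n → F) (hb : b ≠ 0) (ha : a ≠ 0) :
    (Finset.univ.filter fun H : (Fin n → F) ≃ₗ[F] (Fin n → F) => H b = a).card
      * (Fintype.card (Fin n → F) - 1) = Fintype.card ((Fin n → F) ≃ₗ[F] (Fin n → F)) := by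
  classical
  have key : ∀ a' : Fin n → F, a' ≠ 0 →
      (Finset.univ.filter fun H : (Fin n → F) ≃ₗ[F] (Fin n → F) => H b = a').card
        = (Finset.univ.filter fun H : (Fin n → F) ≃ₗ[F] (Fin n → F) => H b = a).card := by
    intro a' ha'
    obtain ⟨G, hG⟩ := il_exists_equiv_single a' a ha' ha
    refine Finset.card_bij' (fun H _ => H.trans G) (fun H _ => H.trans G.symm) ?_ ?_ ?_ ?_
    · intro H hH
      simp only [mem_filter, mem_univ, true_and] at hH ⊢
      simp [LinearEquiv.trans_apply, hH, hG]
    · intro H hH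
      simp only [mem_filter, mem_univ, true_and] at hH ⊢
      simp [LinearEquiv.trans_apply, hH, ← hG]
    · intro H _; ext v; simp
    · intro H _; ext v; simp
  have part : Fintype.card ((Fin n → F) ≃ₗ[F] (Fin n → F))
      = ∑ a' ∈ Finset.univ, (Finset.univ.filter
          fun H : (Fin n → F) ≃ₗ[F] (Fin n → F) => H b = a').card := by
    rw [← Finset.card_univ]
    exact Finset.card_eq_sum_card_fiberwise (fun H _ => Finset.mem_univ _)
  rw [part, ← Finset.sum_erase_add _ _ (Finset.mem_univ (0 : Fin n → F))]
  have h0 : (Finset.univ.filter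
      fun H : (Fin n → F) ≃ₗ[F] (Fin n → F) => H b = 0).card = 0 := by
    rw [Finset.card_eq_zero]
    ext H
    simp only [mem_filter, mem_univ, true_and, Finset.notMem_empty, iff_false]
    intro h
    exact hb (H.map_eq_zero_iff.mp h)
  rw [h0, add_zero]
  rw [Finset.sum_congr rfl (fun a' ha' => key a' (Finset.ne_of_mem_erase ha'))]
  rw [Finset.sum_const, Finset.card_erase_of_mem (Finset.mem_univ _), Finset.card_univ,
    smul_eq_mul, mul_comm]
private lemma il_count_pair (b b' a a' : Fin n → F) (hb : b ≠ 0)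
    (hb' : b' ∉ Submodule.span F {b}) :
    (Finset.univ.filter fun H : (Fin n → F) ≃ₗ[F] (Fin n → F) => H b = a ∧ H b' = a').card
      * ((Fintype.card (Fin n → F) - 1) * (Fintype.card (Fin n → F) - Fintype.card F))
      ≤ Fintype.card ((Fin n → F) ≃ₗ[F] (Fin n → F)) := by
  classical
  -- preservation of "independent pair" under linear equivs
  have pres : ∀ (H : (Fin n → F) ≃ₗ[F] (Fin n → F)) (x y : Fin n → F), x ≠ 0 →
      y ∉ Submodule.span F {x} → H x ≠ 0 ∧ H y ∉ Submodule.span F {H x} := by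
    intro H x y hx hxy
    refine ⟨fun h => hx (H.map_eq_zero_iff.mp h), fun h => ?_⟩
    have hsp : Submodule.span F {H x} = Submodule.map (H : (Fin n → F) →ₗ[F] (Fin n → F))
        (Submodule.span F {x}) := by
      rw [Submodule.map_span]; simp
    rw [hsp] at h
    obtain ⟨z, hz, hz'⟩ := h
    have : z = y := H.injective hz'
    exact hxy (this ▸ hz)
  by_cases hind : a ≠ 0 ∧ a' ∉ Submodule.span F {a}
  · -- the fiber over (a, a')
    set k := (Finset.univ.filter
      fun H : (Fin n → F) ≃ₗ[F] (Fin n → F) => H b = a ∧ H b' = a').card with hk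
    -- all fibers over independent pairs are equal to k
    have key : ∀ p : (Fin n → F) × (Fin n → F), p.1 ≠ 0 → p.2 ∉ Submodule.span F {p.1} →
        (Finset.univ.filter fun H : (Fin n → F) ≃ₗ[F] (Fin n → F) =>
          H b = p.1 ∧ H b' = p.2).card = k := by
      intro p hp1 hp2
      obtain ⟨G, hG1, hG2⟩ := il_exists_equiv_pair p.1 p.2 a a' hp1 hp2 hind.1 hind.2
      rw [hk]
      refine Finset.card_bij' (fun H _ => H.trans G) (fun H _ => H.trans G.symm) ?_ ?_ ?_ ?_
      · intro H hH
        simp only [mem_filter, mem_univ, true_and] at hH ⊢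
        constructor
        · simp [LinearEquiv.trans_apply, hH.1, hG1]
        · simp [LinearEquiv.trans_apply, hH.2, hG2]
      · intro H hH
        simp only [mem_filter, mem_univ, true_and] at hH ⊢
        constructor
        · rw [LinearEquiv.trans_apply, hH.1, ← hG1]; simp
        · rw [LinearEquiv.trans_apply, hH.2, ← hG2]; simp
      · intro H _; ext v; simp
      · intro H _; ext v; simp
    -- partition of all equivs according to (H b, H b')
    have part : Fintype.card ((Fin n → F) ≃ₗ[F] (Fin n → F))
        = ∑ p ∈ Finset.univ ×ˢ Finset.univ, (Finset.univ.filter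
            fun H : (Fin n → F) ≃ₗ[F] (Fin n → F) => H b = p.1 ∧ H b' = p.2).card := by
      rw [← Finset.card_univ]
      have := Finset.card_eq_sum_card_fiberwise
        (f := fun H : (Fin n → F) ≃ₗ[F] (Fin n → F) => (H b, H b'))
        (s := Finset.univ) (t := Finset.univ ×ˢ Finset.univ) (fun H _ => by simp)
      rw [this]
      refine Finset.sum_congr rfl fun p _ => ?_
      congr 1
      ext H
      simp [Prod.ext_iff]
    -- the independent pairs
    set D : Finset ((Fin n → F) × (Fin n → F)) := (Finset.univ ×ˢ Finset.univ).filter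
      (fun p => p.1 ≠ 0 ∧ p.2 ∉ Submodule.span F {p.1}) with hD
    have hDsum : ∑ p ∈ D, (Finset.univ.filter
        fun H : (Fin n → F) ≃ₗ[F] (Fin n → F) => H b = p.1 ∧ H b' = p.2).card
        ≤ Fintype.card ((Fin n → F) ≃ₗ[F] (Fin n → F)) := by
      rw [part]
      exact Finset.sum_le_sum_of_subset (Finset.filter_subset _ _)
    have hDconst : ∑ p ∈ D, (Finset.univ.filter
        fun H : (Fin n → F) ≃ₗ[F] (Fin n → F) => H b = p.1 ∧ H b' = p.2).card
        = D.card * k := by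
      calc ∑ p ∈ D, (Finset.univ.filter
          fun H : (Fin n → F) ≃ₗ[F] (Fin n → F) => H b = p.1 ∧ H b' = p.2).card
          = ∑ _p ∈ D, k := Finset.sum_congr rfl (fun p hp => by
            rw [hD] at hp
            simp only [Finset.mem_filter] at hp
            exact key p hp.2.1 hp.2.2)
        _ = D.card * k := by rw [Finset.sum_const, smul_eq_mul]
    -- lower bound on the number of independent pairs
    have hDcard : (Fintype.card (Fin n → F) - 1) * (Fintype.card (Fin n → F) - Fintype.card F)
        ≤ D.card := by
      have hfib : D.card = ∑ x ∈ Finset.univ, (D.filter fun p => p.1 = x).card :=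
        Finset.card_eq_sum_card_fiberwise (fun p _ => Finset.mem_univ _)
      have hx : ∀ x : Fin n → F, x ≠ 0 →
          Fintype.card (Fin n → F) - Fintype.card F ≤ (D.filter fun p => p.1 = x).card := by
        intro x hx
        have hbij : (D.filter fun p => p.1 = x).card
            = (Finset.univ.filter fun y : Fin n → F => y ∉ Submodule.span F {x}).card := by
          refine Finset.card_bij' (fun p _ => p.2) (fun y _ => (x, y)) ?_ ?_ ?_ ?_
          · intro p hp
            simp only [hD, Finset.mem_filter, Finset.mem_univ, true_and,
              Finset.mem_product] at hp ⊢
            rcases hp with ⟨⟨_, h2⟩, h3⟩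
            rwa [h3] at h2
          · intro y hy
            simp only [hD, Finset.mem_filter, Finset.mem_univ, true_and,
              Finset.mem_product] at hy ⊢
            exact ⟨⟨hx, hy⟩, trivial⟩
          · intro p hp
            simp only [hD, Finset.mem_filter] at hp
            exact Prod.ext hp.2.symm rfl
          · intro y _; rfl
        rw [hbij]
        -- #span{x} ≤ l
        have hspan : (Finset.univ.filter
            fun y : Fin n → F => y ∈ Submodule.span F {x}).card ≤ Fintype.card F := by
          rw [← Finset.card_univ]
          refine Finset.card_le_card_of_surjOn (fun c : F => c • x) ?_
          intro y hy
          simp only [Finset.coe_filter, Set.mem_setOf_eq, Finset.mem_univ, true_and] at hy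
          obtain ⟨c, hc⟩ := Submodule.mem_span_singleton.mp hy
          exact ⟨c, by simp, hc⟩
        have := Finset.card_filter_add_card_filter_not
          (s := (Finset.univ : Finset (Fin n → F)))
          (p := fun y => y ∈ Submodule.span F {x})
        rw [Finset.card_univ] at this
        omega
      calc (Fintype.card (Fin n → F) - 1) * (Fintype.card (Fin n → F) - Fintype.card F)
          = ∑ _x ∈ Finset.univ.erase (0 : Fin n → F),
              (Fintype.card (Fin n → F) - Fintype.card F) := by
            rw [Finset.sum_const, Finset.card_erase_of_mem (Finset.mem_univ _),
              Finset.card_univ, smul_eq_mul]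
        _ ≤ ∑ x ∈ Finset.univ.erase (0 : Fin n → F), (D.filter fun p => p.1 = x).card :=
            Finset.sum_le_sum fun x hxm => hx x (Finset.ne_of_mem_erase hxm)
        _ ≤ ∑ x ∈ Finset.univ, (D.filter fun p => p.1 = x).card :=
            Finset.sum_le_sum_of_subset (Finset.erase_subset _ _)
        _ = D.card := hfib.symm
    calc k * ((Fintype.card (Fin n → F) - 1) * (Fintype.card (Fin n → F) - Fintype.card F))
        ≤ k * D.card := Nat.mul_le_mul_left k hDcard
      _ = D.card * k := Nat.mul_comm _ _
      _ = _ := hDconst.symm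
      _ ≤ _ := hDsum
  · -- the fiber is empty
    have : (Finset.univ.filter
        fun H : (Fin n → F) ≃ₗ[F] (Fin n → F) => H b = a ∧ H b' = a').card = 0 := by
      rw [Finset.card_eq_zero]
      ext H
      simp only [Finset.mem_filter, Finset.mem_univ, true_and, Finset.notMem_empty, iff_false]
      rintro ⟨h1, h2⟩
      exact hind (h1 ▸ h2 ▸ pres H b b' hb hb')
    simp [this]
private lemma il_swap (Af Bf : Finset (Fin n → F)) :
    (∑ H : (Fin n → F) ≃ₗ[F] (Fin n → F), ((Af ×ˢ Bf).filter fun p => H p.2 = p.1).card)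
      = ∑ p ∈ Af ×ˢ Bf, (Finset.univ.filter
          fun H : (Fin n → F) ≃ₗ[F] (Fin n → F) => H p.2 = p.1).card := by
  classical
  simp_rw [Finset.card_filter]
  exact Finset.sum_comm

private lemma il_sumf (Af Bf : Finset (Fin n → F)) (hAf : (0 : Fin n → F) ∉ Af)
    (hBf : (0 : Fin n → F) ∉ Bf) :
    (∑ p ∈ Af ×ˢ Bf, (Finset.univ.filter
        fun H : (Fin n → F) ≃ₗ[F] (Fin n → F) => H p.2 = p.1).card)
      * (Fintype.card (Fin n → F) - 1)
      = Af.card * Bf.card * Fintype.card ((Fin n → F) ≃ₗ[F] (Fin n → F)) := by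
  classical
  rw [Finset.sum_mul]
  have h : ∀ p ∈ Af ×ˢ Bf, (Finset.univ.filter
      fun H : (Fin n → F) ≃ₗ[F] (Fin n → F) => H p.2 = p.1).card
        * (Fintype.card (Fin n → F) - 1)
      = Fintype.card ((Fin n → F) ≃ₗ[F] (Fin n → F)) := by
    intro p hp
    rw [Finset.mem_product] at hp
    exact il_count_single p.2 p.1 (fun h => hBf (h ▸ hp.2)) (fun h => hAf (h ▸ hp.1))
  rw [Finset.sum_congr rfl h, Finset.sum_const, smul_eq_mul, Finset.card_product]

private lemma il_sum2 (Af Bf : Finset (Fin n → F)) (hAf : (0 : Fin n → F) ∉ Af)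
    (hBf : (0 : Fin n → F) ∉ Bf)
    (hql : Fintype.card F < Fintype.card (Fin n → F)) :
    (∑ H : (Fin n → F) ≃ₗ[F] (Fin n → F),
        ((((Af ×ˢ Bf).filter fun p => H p.2 = p.1).card : ℝ))^2)
      ≤ ((Fintype.card F : ℝ) - 1) * ∑ p ∈ Af ×ˢ Bf, ((Finset.univ.filter
            fun H : (Fin n → F) ≃ₗ[F] (Fin n → F) => H p.2 = p.1).card : ℝ)
        + (Af.card : ℝ)^2 * (Bf.card : ℝ)^2
            * (Fintype.card ((Fin n → F) ≃ₗ[F] (Fin n → F)) : ℝ)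
            / (((Fintype.card (Fin n → F) : ℝ) - 1) * ((Fintype.card (Fin n → F) : ℝ)
                - (Fintype.card F : ℝ))) := by
  classical
  set P := Af ×ˢ Bf with hP
  have hq1 : 1 ≤ Fintype.card (Fin n → F) := Fintype.card_pos
  have hl1 : 1 ≤ Fintype.card F := Fintype.card_pos
  have hqr : (1:ℝ) < (Fintype.card (Fin n → F) : ℝ) := by
    have : 1 < Fintype.card (Fin n → F) := lt_of_le_of_lt hl1 hql
    exact_mod_cast this
  have hqlr : (Fintype.card F : ℝ) < (Fintype.card (Fin n → F) : ℝ) := by exact_mod_cast hql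
  set M : ℝ := (Fintype.card ((Fin n → F) ≃ₗ[F] (Fin n → F)) : ℝ)
      / (((Fintype.card (Fin n → F) : ℝ) - 1)
          * ((Fintype.card (Fin n → F) : ℝ) - (Fintype.card F : ℝ))) with hM
  have hMnonneg : 0 ≤ M := by
    apply div_nonneg (Nat.cast_nonneg _)
    apply mul_nonneg <;> linarith
  -- each pair fiber is bounded by M
  have hgM : ∀ p ∈ P, ∀ a' b' : Fin n → F, b' ∉ Submodule.span F {p.2} →
      ((Finset.univ.filter fun H : (Fin n → F) ≃ₗ[F] (Fin n → F) =>
          H p.2 = p.1 ∧ H b' = a').card : ℝ) ≤ M := by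
    intro p hp a' b' hb'
    rw [Finset.mem_product] at hp
    have hp2 : p.2 ≠ 0 := fun h => hBf (h ▸ hp.2)
    have := il_count_pair p.2 b' p.1 a' hp2 hb'
    rw [hM, le_div_iff₀ (by nlinarith)]
    calc ((Finset.univ.filter fun H : (Fin n → F) ≃ₗ[F] (Fin n → F) =>
          H p.2 = p.1 ∧ H b' = a').card : ℝ)
          * (((Fintype.card (Fin n → F) : ℝ) - 1)
              * ((Fintype.card (Fin n → F) : ℝ) - (Fintype.card F : ℝ)))
        = (((Finset.univ.filter fun H : (Fin n → F) ≃ₗ[F] (Fin n → F) =>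
            H p.2 = p.1 ∧ H b' = a').card
            * ((Fintype.card (Fin n → F) - 1) * (Fintype.card (Fin n → F) - Fintype.card F)) : ℕ)
            : ℝ) := by
          push_cast [Nat.cast_sub hq1, Nat.cast_sub (le_of_lt hql)]
          ring
      _ ≤ _ := by exact_mod_cast this
  -- expand the square as a double sum
  have hsq : ∀ H : (Fin n → F) ≃ₗ[F] (Fin n → F),
      ((P.filter fun p => H p.2 = p.1).card : ℝ)^2
        = ∑ p ∈ P, ∑ p' ∈ P,
            (if H p.2 = p.1 ∧ H p'.2 = p'.1 then (1:ℝ) else 0) := by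
    intro H
    rw [sq, Finset.card_filter]
    push_cast
    rw [Finset.sum_mul_sum]
    refine Finset.sum_congr rfl fun p _ => Finset.sum_congr rfl fun p' _ => ?_
    by_cases h1 : H p.2 = p.1 <;> by_cases h2 : H p'.2 = p'.1 <;> simp [h1, h2]
  have hswap2 : (∑ H : (Fin n → F) ≃ₗ[F] (Fin n → F),
      ((P.filter fun p => H p.2 = p.1).card : ℝ)^2)
      = ∑ p ∈ P, ∑ p' ∈ P, ((Finset.univ.filter
          fun H : (Fin n → F) ≃ₗ[F] (Fin n → F) => H p.2 = p.1 ∧ H p'.2 = p'.1).card : ℝ) := by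
    simp_rw [hsq]
    rw [Finset.sum_comm]
    refine Finset.sum_congr rfl fun p _ => ?_
    rw [Finset.sum_comm]
    refine Finset.sum_congr rfl fun p' _ => ?_
    rw [Finset.card_filter]
    push_cast
    rfl
  rw [hswap2]
  -- bound the inner double sum for each p
  have hinner : ∀ p ∈ P, (∑ p' ∈ P, ((Finset.univ.filter
      fun H : (Fin n → F) ≃ₗ[F] (Fin n → F) => H p.2 = p.1 ∧ H p'.2 = p'.1).card : ℝ))
      ≤ ((Fintype.card F : ℝ) - 1) * ((Finset.univ.filter
          fun H : (Fin n → F) ≃ₗ[F] (Fin n → F) => H p.2 = p.1).card : ℝ)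
        + (Af.card : ℝ) * (Bf.card : ℝ) * M := by
    intro p hp
    have hp' := Finset.mem_product.mp hp
    have hp2 : p.2 ≠ 0 := fun h => hBf (h ▸ hp'.2)
    -- rewrite as a sum over a' and b'
    have hprod : (∑ p' ∈ P, ((Finset.univ.filter
        fun H : (Fin n → F) ≃ₗ[F] (Fin n → F) => H p.2 = p.1 ∧ H p'.2 = p'.1).card : ℝ))
        = ∑ b' ∈ Bf, ∑ a' ∈ Af, ((Finset.univ.filter
            fun H : (Fin n → F) ≃ₗ[F] (Fin n → F) => H p.2 = p.1 ∧ H b' = a').card : ℝ) := by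
      rw [hP, Finset.sum_product]
      exact Finset.sum_comm
    rw [hprod, ← Finset.sum_filter_add_sum_filter_not Bf (fun b' => b' ∈ Submodule.span F {p.2})]
    have hdep : (∑ b' ∈ Bf.filter (fun b' => b' ∈ Submodule.span F {p.2}), ∑ a' ∈ Af,
        ((Finset.univ.filter fun H : (Fin n → F) ≃ₗ[F] (Fin n → F) =>
          H p.2 = p.1 ∧ H b' = a').card : ℝ))
        ≤ ((Fintype.card F : ℝ) - 1) * ((Finset.univ.filter
            fun H : (Fin n → F) ≃ₗ[F] (Fin n → F) => H p.2 = p.1).card : ℝ) := by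
      have hfix : ∀ b' : Fin n → F, (∑ a' ∈ Af, ((Finset.univ.filter
          fun H : (Fin n → F) ≃ₗ[F] (Fin n → F) => H p.2 = p.1 ∧ H b' = a').card : ℝ))
          ≤ ((Finset.univ.filter
              fun H : (Fin n → F) ≃ₗ[F] (Fin n → F) => H p.2 = p.1).card : ℝ) := by
        intro b'
        have hexact : (∑ a' ∈ (Finset.univ : Finset (Fin n → F)), ((Finset.univ.filter
            fun H : (Fin n → F) ≃ₗ[F] (Fin n → F) => H p.2 = p.1 ∧ H b' = a').card))
            = (Finset.univ.filter
              fun H : (Fin n → F) ≃ₗ[F] (Fin n → F) => H p.2 = p.1).card := by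
          rw [Finset.card_eq_sum_card_fiberwise
            (f := fun H : (Fin n → F) ≃ₗ[F] (Fin n → F) => H b')
            (t := Finset.univ) (fun H _ => Finset.mem_univ _)]
          refine Finset.sum_congr rfl fun a' _ => ?_
          rw [Finset.filter_filter]
        calc (∑ a' ∈ Af, ((Finset.univ.filter
            fun H : (Fin n → F) ≃ₗ[F] (Fin n → F) => H p.2 = p.1 ∧ H b' = a').card : ℝ))
            ≤ ∑ a' ∈ (Finset.univ : Finset (Fin n → F)), ((Finset.univ.filter
              fun H : (Fin n → F) ≃ₗ[F] (Fin n → F) => H p.2 = p.1 ∧ H b' = a').card : ℝ) :=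
              Finset.sum_le_sum_of_subset_of_nonneg (Finset.subset_univ _)
                (fun _ _ _ => Nat.cast_nonneg _)
          _ = _ := by exact_mod_cast congrArg (Nat.cast : ℕ → ℝ) hexact
      have hcard : (Bf.filter (fun b' => b' ∈ Submodule.span F {p.2})).card
          ≤ Fintype.card F - 1 := by
        have : (Bf.filter (fun b' => b' ∈ Submodule.span F {p.2})).card
            ≤ ((Finset.univ : Finset F).erase 0).card := by
          refine Finset.card_le_card_of_surjOn (fun c : F => c • p.2) ?_
          intro y hy
          simp only [Finset.coe_filter, Set.mem_setOf_eq] at hy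
          obtain ⟨hyB, hysp⟩ := hy
          obtain ⟨c, hc⟩ := Submodule.mem_span_singleton.mp hysp
          have hc0 : c ≠ 0 := by
            rintro rfl
            rw [zero_smul] at hc
            exact hBf (hc ▸ hyB)
          exact ⟨c, by simp [hc0], hc⟩
        rwa [Finset.card_erase_of_mem (Finset.mem_univ _), Finset.card_univ] at this
      calc (∑ b' ∈ Bf.filter (fun b' => b' ∈ Submodule.span F {p.2}), ∑ a' ∈ Af,
          ((Finset.univ.filter fun H : (Fin n → F) ≃ₗ[F] (Fin n → F) =>
            H p.2 = p.1 ∧ H b' = a').card : ℝ))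
          ≤ ∑ _b' ∈ Bf.filter (fun b' => b' ∈ Submodule.span F {p.2}),
              ((Finset.univ.filter
                fun H : (Fin n → F) ≃ₗ[F] (Fin n → F) => H p.2 = p.1).card : ℝ) :=
            Finset.sum_le_sum fun b' _ => hfix b'
        _ = ((Bf.filter (fun b' => b' ∈ Submodule.span F {p.2})).card : ℝ)
              * ((Finset.univ.filter
                fun H : (Fin n → F) ≃ₗ[F] (Fin n → F) => H p.2 = p.1).card : ℝ) := by
            rw [Finset.sum_const, nsmul_eq_mul]
        _ ≤ _ := by
            apply mul_le_mul_of_nonneg_right _ (Nat.cast_nonneg _)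
            have h2 : ((Fintype.card F - 1 : ℕ) : ℝ) = (Fintype.card F : ℝ) - 1 := by
              rw [Nat.cast_sub hl1]; push_cast; ring
            calc ((Bf.filter (fun b' => b' ∈ Submodule.span F {p.2})).card : ℝ)
                ≤ ((Fintype.card F - 1 : ℕ) : ℝ) := by exact_mod_cast hcard
              _ = (Fintype.card F : ℝ) - 1 := h2
    have hindep : (∑ b' ∈ Bf.filter (fun b' => ¬ b' ∈ Submodule.span F {p.2}), ∑ a' ∈ Af,
        ((Finset.univ.filter fun H : (Fin n → F) ≃ₗ[F] (Fin n → F) =>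
          H p.2 = p.1 ∧ H b' = a').card : ℝ))
        ≤ (Af.card : ℝ) * (Bf.card : ℝ) * M := by
      calc (∑ b' ∈ Bf.filter (fun b' => ¬ b' ∈ Submodule.span F {p.2}), ∑ a' ∈ Af,
          ((Finset.univ.filter fun H : (Fin n → F) ≃ₗ[F] (Fin n → F) =>
            H p.2 = p.1 ∧ H b' = a').card : ℝ))
          ≤ ∑ _b' ∈ Bf.filter (fun b' => ¬ b' ∈ Submodule.span F {p.2}), ∑ _a' ∈ Af, M := by
            refine Finset.sum_le_sum fun b' hb' => Finset.sum_le_sum fun a' _ => ?_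
            exact hgM p hp a' b' (Finset.mem_filter.mp hb').2
        _ = ((Bf.filter (fun b' => ¬ b' ∈ Submodule.span F {p.2})).card : ℝ)
              * ((Af.card : ℝ) * M) := by
            rw [Finset.sum_const, Finset.sum_const, nsmul_eq_mul, nsmul_eq_mul]
        _ ≤ (Bf.card : ℝ) * ((Af.card : ℝ) * M) := by
            apply mul_le_mul_of_nonneg_right _ (by positivity)
            exact_mod_cast Finset.card_le_card (Finset.filter_subset _ _)
        _ = (Af.card : ℝ) * (Bf.card : ℝ) * M := by ring
    calc _ ≤ ((Fintype.card F : ℝ) - 1) * ((Finset.univ.filter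
          fun H : (Fin n → F) ≃ₗ[F] (Fin n → F) => H p.2 = p.1).card : ℝ)
          + (Af.card : ℝ) * (Bf.card : ℝ) * M := add_le_add hdep hindep
      _ = _ := rfl
  calc (∑ p ∈ P, ∑ p' ∈ P, ((Finset.univ.filter
      fun H : (Fin n → F) ≃ₗ[F] (Fin n → F) => H p.2 = p.1 ∧ H p'.2 = p'.1).card : ℝ))
      ≤ ∑ p ∈ P, (((Fintype.card F : ℝ) - 1) * ((Finset.univ.filter
          fun H : (Fin n → F) ≃ₗ[F] (Fin n → F) => H p.2 = p.1).card : ℝ)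
          + (Af.card : ℝ) * (Bf.card : ℝ) * M) := Finset.sum_le_sum hinner
    _ = ((Fintype.card F : ℝ) - 1) * (∑ p ∈ P, ((Finset.univ.filter
          fun H : (Fin n → F) ≃ₗ[F] (Fin n → F) => H p.2 = p.1).card : ℝ))
          + (P.card : ℝ) * ((Af.card : ℝ) * (Bf.card : ℝ) * M) := by
        rw [Finset.sum_add_distrib, ← Finset.mul_sum, Finset.sum_const, nsmul_eq_mul]
    _ = _ := by
        rw [hP, Finset.card_product, hM]
        push_cast
        ring
end ILAux
set_option maxHeartbeats 2000000 in
theorem intersection_lemma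
    (F : Type*) [Field F] [Fintype F] (l n : ℕ) (hl : Fintype.card F = l) (hn : 1 ≤ n)
    (A B : Set (Fin n → F)) (hA : (0 : Fin n → F) ∉ A) (hB : (0 : Fin n → F) ∉ B)
    (θ : ℝ)
    (hθ : θ = Real.logb l ((Nat.card A : ℝ) * (Nat.card B : ℝ) / n) - n - 1)
    (hθ1 : 1 < θ)
    (hcond : θ⁻¹ * Real.log θ ≥ ((l : ℝ) ^ n)⁻¹ * (Nat.card A : ℝ)) :
    (Nat.card {H : (Fin n → F) ≃ₗ[F] (Fin n → F) //
        A ∩ (fun v => H v) '' B = ∅} : ℝ)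
      ≤ (1 + Real.log θ) / θ *
        (Nat.card ((Fin n → F) ≃ₗ[F] (Fin n → F)) : ℝ) := by
  classical
  haveI : Finite ((Fin n → F) ≃ₗ[F] (Fin n → F)) :=
    Finite.of_injective (fun G => (G : (Fin n → F) → (Fin n → F))) DFunLike.coe_injective
  haveI : Fintype ((Fin n → F) ≃ₗ[F] (Fin n → F)) := Fintype.ofFinite _
  have hl2 : 2 ≤ l := by rw [← hl]; exact Fintype.one_lt_card
  have hq : Fintype.card (Fin n → F) = l ^ n := by
    rw [Fintype.card_fun, hl, Fintype.card_fin]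
  -- finite sets
  have hAfin : A.Finite := Set.toFinite A
  have hBfin : B.Finite := Set.toFinite B
  set Af := hAfin.toFinset with hAfdef
  set Bf := hBfin.toFinset with hBfdef
  have hmemA : ∀ x, x ∈ Af ↔ x ∈ A := fun x => hAfin.mem_toFinset
  have hmemB : ∀ x, x ∈ Bf ↔ x ∈ B := fun x => hBfin.mem_toFinset
  have hAf0 : (0 : Fin n → F) ∉ Af := fun h => hA ((hmemA _).mp h)
  have hBf0 : (0 : Fin n → F) ∉ Bf := fun h => hB ((hmemB _).mp h)
  have hcardA : (Nat.card A : ℝ) = (Af.card : ℝ) := by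
    rw [Nat.card_coe_set_eq, Set.ncard_eq_toFinset_card A hAfin]
  have hcardB : (Nat.card B : ℝ) = (Bf.card : ℝ) := by
    rw [Nat.card_coe_set_eq, Set.ncard_eq_toFinset_card B hBfin]
  -- real constants
  have hlr1 : (1:ℝ) < (l:ℝ) := by exact_mod_cast lt_of_lt_of_le one_lt_two hl2
  have hlr2 : (2:ℝ) ≤ (l:ℝ) := by exact_mod_cast hl2
  have hnpos : (0:ℝ) < (n:ℝ) := by exact_mod_cast hn
  have hn1 : (1:ℝ) ≤ (n:ℝ) := by exact_mod_cast hn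
  -- nonemptiness
  have hprod0 : (Nat.card A : ℝ) * (Nat.card B : ℝ) ≠ 0 := by
    intro h0
    rw [hθ, h0, zero_div, Real.logb_zero] at hθ1
    have : (0:ℝ) ≤ (n:ℝ) := Nat.cast_nonneg n
    linarith
  have hABpos : 0 < (Nat.card A : ℝ) * (Nat.card B : ℝ) :=
    lt_of_le_of_ne (by positivity) (Ne.symm hprod0)
  have hABfpos : 0 < (Af.card : ℝ) * (Bf.card : ℝ) := by
    rw [← hcardA, ← hcardB]; exact hABpos
  -- the key value of |A||B|
  have hx : 0 < (Nat.card A : ℝ) * (Nat.card B : ℝ) / n := div_pos hABpos hnpos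
  have hlog : Real.logb l ((Nat.card A : ℝ) * (Nat.card B : ℝ) / n) = θ + n + 1 := by
    rw [hθ]; ring
  have hval : (Nat.card A : ℝ) * (Nat.card B : ℝ)
      = n * (l:ℝ) ^ (θ + (n:ℝ) + 1) := by
    have h1 : (Nat.card A : ℝ) * (Nat.card B : ℝ) / n = (l:ℝ) ^ (θ + (n:ℝ) + 1) := by
      rw [← hlog]
      exact (Real.rpow_logb (by linarith) (by linarith) hx).symm
    have h2 := (div_eq_iff (ne_of_gt hnpos)).mp h1
    linarith [h2]
  -- |A|, |B| ≤ q
  have hqcast : (Fintype.card (Fin n → F) : ℝ) = (l:ℝ) ^ ((n:ℕ):ℝ) := by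
    rw [hq, Real.rpow_natCast]; push_cast; ring
  have hcarle : (Af.card : ℝ) ≤ (l:ℝ) ^ ((n:ℕ):ℝ) := by
    rw [← hqcast]; exact_mod_cast Finset.card_le_univ Af
  have hcbrle : (Bf.card : ℝ) ≤ (l:ℝ) ^ ((n:ℕ):ℝ) := by
    rw [← hqcast]; exact_mod_cast Finset.card_le_univ Bf
  -- θ + 1 ≤ n
  have hθn : θ + 1 ≤ (n:ℝ) := by
    have h1 : (l:ℝ) ^ (θ + (n:ℝ) + 1) ≤ (l:ℝ) ^ ((n:ℝ) + (n:ℝ)) := by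
      have h2 : (l:ℝ) ^ (θ + (n:ℝ) + 1) ≤ (n:ℝ) * (l:ℝ) ^ (θ + (n:ℝ) + 1) := by
        nlinarith [Real.rpow_pos_of_pos (show (0:ℝ) < l by linarith) (θ + (n:ℝ) + 1)]
      have h3 : (n:ℝ) * (l:ℝ) ^ (θ + (n:ℝ) + 1) ≤ (l:ℝ) ^ ((n:ℝ) + (n:ℝ)) := by
        rw [← hval, hcardA, hcardB, Real.rpow_add (by linarith : (0:ℝ) < (l:ℝ))]
        exact mul_le_mul hcarle hcbrle (Nat.cast_nonneg _) (by positivity)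
      linarith
    have := (Real.rpow_le_rpow_left_iff hlr1).mp h1
    linarith
  have hn2 : 2 ≤ n := by
    have h2 : (2:ℝ) < (n:ℝ) := by linarith
    exact_mod_cast le_of_lt (by exact_mod_cast h2 : 2 < n)
  have hql : Fintype.card F < Fintype.card (Fin n → F) := by
    rw [hl, hq]
    calc l = l ^ 1 := (pow_one l).symm
      _ < l ^ n := Nat.pow_lt_pow_right (lt_of_lt_of_le one_lt_two hl2) (lt_of_lt_of_le one_lt_two hn2)
  -- notation
  set N := Fintype.card ((Fin n → F) ≃ₗ[F] (Fin n → F)) with hNdef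
  have hNpos : 0 < N := Fintype.card_pos
  have hNr : (0:ℝ) < (N:ℝ) := by exact_mod_cast hNpos
  set qr := (Fintype.card (Fin n → F) : ℝ) with hqrdef
  have hq2 : 1 < Fintype.card (Fin n → F) := by
    rw [hq]; exact Nat.one_lt_pow (by omega) (by omega)
  have hqr1 : (1:ℝ) < qr := by rw [hqrdef]; exact_mod_cast hq2
  have hqlr : (l:ℝ) < qr := by rw [hqrdef, ← hl]; exact_mod_cast hql
  have hqsub : ((Fintype.card (Fin n → F) - 1 : ℕ) : ℝ) = qr - 1 := by
    rw [Nat.cast_sub (le_of_lt hq2)]; push_cast; ring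
  -- X and S
  set X : ((Fin n → F) ≃ₗ[F] (Fin n → F)) → ℕ :=
    fun H => ((Af ×ˢ Bf).filter fun p => H p.2 = p.1).card with hXdef
  set S := Finset.univ.filter (fun H : (Fin n → F) ≃ₗ[F] (Fin n → F) =>
    A ∩ (fun v => H v) '' B = ∅) with hSdef
  have hLHS : (Nat.card {H : (Fin n → F) ≃ₗ[F] (Fin n → F) //
      A ∩ (fun v => H v) '' B = ∅} : ℝ) = (S.card : ℝ) := by
    congr 1
    rw [Nat.card_eq_fintype_card, Fintype.card_subtype]
  have hX0 : ∀ H ∈ S, X H = 0 := by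
    intro H hH
    rw [hSdef, Finset.mem_filter] at hH
    rw [hXdef, Finset.card_eq_zero, Finset.filter_eq_empty_iff]
    rintro p hp hpe
    have hp' := Finset.mem_product.mp hp
    have hmem : p.1 ∈ A ∩ (fun v => H v) '' B :=
      ⟨(hmemA _).mp hp'.1, ⟨p.2, (hmemB _).mp hp'.2, hpe⟩⟩
    rw [hH.2] at hmem
    exact Set.notMem_empty _ hmem
  -- first moment
  have hsumfR : (∑ p ∈ Af ×ˢ Bf, ((Finset.univ.filter
      fun H : (Fin n → F) ≃ₗ[F] (Fin n → F) => H p.2 = p.1).card : ℝ))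
      = (Af.card : ℝ) * (Bf.card : ℝ) * (N:ℝ) / (qr - 1) := by
    have h := il_sumf Af Bf hAf0 hBf0
    have hcast := congrArg (Nat.cast : ℕ → ℝ) h
    push_cast at hcast
    rw [hqsub] at hcast
    rw [eq_div_iff (by linarith : qr - 1 ≠ 0)]
    exact hcast
  have hsum1R : (∑ H : (Fin n → F) ≃ₗ[F] (Fin n → F), (X H : ℝ))
      = (Af.card : ℝ) * (Bf.card : ℝ) * (N:ℝ) / (qr - 1) := by
    rw [← hsumfR]
    have h := il_swap (F := F) (n := n) Af Bf
    have hcast := congrArg (Nat.cast : ℕ → ℝ) h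
    push_cast at hcast
    exact hcast
  -- second moment
  have hsum2R : (∑ H : (Fin n → F) ≃ₗ[F] (Fin n → F), (X H : ℝ)^2)
      ≤ ((l:ℝ) - 1) * ((Af.card : ℝ) * (Bf.card : ℝ) * (N:ℝ) / (qr - 1))
        + (Af.card : ℝ)^2 * (Bf.card : ℝ)^2 * (N:ℝ) / ((qr - 1) * (qr - (l:ℝ))) := by
    have h := il_sum2 Af Bf hAf0 hBf0 hql
    rw [hsumfR, hl] at h
    exact h
  -- Chebyshev
  obtain ⟨μ, hμdef⟩ : ∃ μ : ℝ, μ = (Af.card : ℝ) * (Bf.card : ℝ) / (qr - 1) := ⟨_, rfl⟩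
  have hμpos : 0 < μ := hμdef ▸ div_pos hABfpos (by linarith)
  have hAB_μ : (Af.card : ℝ) * (Bf.card : ℝ) = μ * (qr - 1) := by
    rw [hμdef]; exact (div_mul_cancel₀ _ (by linarith : qr - 1 ≠ 0)).symm
  have hcheb : (S.card : ℝ) * μ^2 ≤ (∑ H : (Fin n → F) ≃ₗ[F] (Fin n → F), (X H : ℝ)^2)
      - (N:ℝ) * μ^2 := by
    have h1 : (S.card : ℝ) * μ^2 = ∑ H ∈ S, ((X H : ℝ) - μ)^2 := by
      rw [Finset.sum_congr rfl (fun H hH => by rw [hX0 H hH] : ∀ H ∈ S,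
        ((X H : ℝ) - μ)^2 = ((0:ℕ) - μ)^2)]
      rw [Finset.sum_const, nsmul_eq_mul]
      push_cast
      ring
    have h2 : ∑ H ∈ S, ((X H : ℝ) - μ)^2
        ≤ ∑ H ∈ Finset.univ, ((X H : ℝ) - μ)^2 :=
      Finset.sum_le_sum_of_subset_of_nonneg (Finset.subset_univ S)
        (fun _ _ _ => sq_nonneg _)
    have h3 : ∑ H ∈ Finset.univ, ((X H : ℝ) - μ)^2
        = (∑ H : (Fin n → F) ≃ₗ[F] (Fin n → F), (X H : ℝ)^2)
          - 2*μ*(∑ H : (Fin n → F) ≃ₗ[F] (Fin n → F), (X H : ℝ)) + (N:ℝ)*μ^2 := by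
      have : ∀ H : (Fin n → F) ≃ₗ[F] (Fin n → F),
          ((X H : ℝ) - μ)^2 = (X H : ℝ)^2 - 2*μ*(X H : ℝ) + μ^2 := fun H => by ring
      rw [Finset.sum_congr rfl (fun H _ => this H)]
      rw [Finset.sum_add_distrib, Finset.sum_sub_distrib, ← Finset.mul_sum,
        Finset.sum_const, nsmul_eq_mul, Finset.card_univ]
    have h4 : 2*μ*(∑ H : (Fin n → F) ≃ₗ[F] (Fin n → F), (X H : ℝ)) = 2*(N:ℝ)*μ^2 := by
      rw [hsum1R]
      rw [show (Af.card : ℝ) * (Bf.card : ℝ) * (N:ℝ) / (qr - 1)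
        = μ * (N:ℝ) by rw [hμdef]; ring]
      ring
    rw [h1] at *
    rw [h3, h4] at h2
    linarith
  -- bound S.card
  have hqlr_pos : 0 < qr - (l:ℝ) := by linarith
  have hmain : (S.card : ℝ) * μ^2
      ≤ (N:ℝ) * (((l:ℝ) - 1) * μ + μ^2 * ((l:ℝ)-1)/(qr - (l:ℝ))) := by
    have e1 : ((l:ℝ) - 1) * ((Af.card : ℝ) * (Bf.card : ℝ) * (N:ℝ) / (qr - 1))
        = (N:ℝ) * (((l:ℝ)-1) * μ) := by
      rw [hμdef]; ring
    have e2 : (Af.card : ℝ)^2 * (Bf.card : ℝ)^2 * (N:ℝ) / ((qr - 1) * (qr - (l:ℝ)))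
        - (N:ℝ)*μ^2 = (N:ℝ) * (μ^2 * ((l:ℝ)-1)/(qr - (l:ℝ))) := by
      have h5 : (Af.card : ℝ)^2 * (Bf.card : ℝ)^2 = μ^2 * (qr-1)^2 := by
        rw [← mul_pow, hAB_μ, mul_pow]
      rw [h5]
      have hq1ne : qr - 1 ≠ 0 := by linarith
      have hqlne : qr - (l:ℝ) ≠ 0 := by linarith
      field_simp
      ring
    calc (S.card : ℝ) * μ^2
        ≤ (∑ H : (Fin n → F) ≃ₗ[F] (Fin n → F), (X H : ℝ)^2) - (N:ℝ) * μ^2 := hcheb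
      _ ≤ ((l:ℝ) - 1) * ((Af.card : ℝ) * (Bf.card : ℝ) * (N:ℝ) / (qr - 1))
          + (Af.card : ℝ)^2 * (Bf.card : ℝ)^2 * (N:ℝ) / ((qr - 1) * (qr - (l:ℝ)))
          - (N:ℝ)*μ^2 := by linarith
      _ = _ := by rw [e1]; linarith [e2]
  have hScard : (S.card : ℝ) ≤ (N:ℝ) * (((l:ℝ)-1)/μ + ((l:ℝ)-1)/(qr - (l:ℝ))) := by
    rw [← mul_le_mul_iff_left₀ (pow_pos hμpos 2)]
    calc (S.card : ℝ) * μ^2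
        ≤ (N:ℝ) * (((l:ℝ) - 1) * μ + μ^2 * ((l:ℝ)-1)/(qr - (l:ℝ))) := hmain
      _ = (N:ℝ) * (((l:ℝ)-1)/μ + ((l:ℝ)-1)/(qr - (l:ℝ))) * μ^2 := by
          have hμne : μ ≠ 0 := ne_of_gt hμpos
          have hqlne : qr - (l:ℝ) ≠ 0 := ne_of_gt hqlr_pos
          field_simp
  -- final analytic bound
  obtain ⟨t, htdef⟩ : ∃ t : ℝ, t = (l:ℝ) ^ θ := ⟨_, rfl⟩
  have hl0 : (0:ℝ) < (l:ℝ) := by linarith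
  have htpos : 0 < t := htdef ▸ Real.rpow_pos_of_pos hl0 θ
  have hθ0 : (0:ℝ) < θ := by linarith
  have hlt : (l:ℝ) ≤ t := by
    rw [htdef]
    calc (l:ℝ) = (l:ℝ) ^ (1:ℝ) := (Real.rpow_one _).symm
      _ ≤ (l:ℝ) ^ θ := Real.rpow_le_rpow_of_exponent_le (le_of_lt hlr1) (le_of_lt hθ1)
  have hμlow : (n:ℝ) * ((l:ℝ) * t) ≤ μ := by
    have h1 : (Af.card:ℝ) * (Bf.card:ℝ) = (n:ℝ) * (t * (qr * (l:ℝ))) := by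
      rw [← hcardA, ← hcardB, hval, htdef, hqcast]
      rw [Real.rpow_add hl0, Real.rpow_add hl0, Real.rpow_one]
      ring
    rw [hμdef, h1, le_div_iff₀ (by linarith only [hqr1] : (0:ℝ) < qr - 1)]
    nlinarith only [htpos, hl0, hnpos, hqr1, mul_pos (mul_pos hnpos hl0) htpos]
  have hqrlow : (l:ℝ) * t ≤ qr := by
    rw [hqcast, htdef]
    calc (l:ℝ) * (l:ℝ)^θ = (l:ℝ)^(θ + 1) := by
          rw [Real.rpow_add hl0, Real.rpow_one]; ring
      _ ≤ (l:ℝ)^((n:ℕ):ℝ) :=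
          Real.rpow_le_rpow_of_exponent_le (le_of_lt hlr1) (by exact_mod_cast hθn)
  have e1 : ((l:ℝ)-1)/μ ≤ t⁻¹ := by
    rw [inv_eq_one_div, div_le_div_iff₀ hμpos htpos]
    nlinarith only [hμlow, htpos, hn1, hl0,
      mul_nonneg (by linarith only [hn1] : (0:ℝ) ≤ (n:ℝ) - 1) (le_of_lt (mul_pos hl0 htpos))]
  have e2 : ((l:ℝ)-1)/(qr - (l:ℝ)) ≤ t⁻¹ := by
    rw [inv_eq_one_div, div_le_div_iff₀ hqlr_pos htpos]
    nlinarith only [hqrlow, hlt, htpos, hl0]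
  have e3 : t⁻¹ ≤ ((2:ℝ) ^ (θ:ℝ))⁻¹ := by
    have h2t : (2:ℝ) ^ (θ:ℝ) ≤ t := by
      rw [htdef]
      exact Real.rpow_le_rpow (by norm_num) hlr2 (le_of_lt hθ0)
    exact inv_anti₀ (Real.rpow_pos_of_pos two_pos θ) h2t
  have e4 : 2 * ((2:ℝ) ^ (θ:ℝ))⁻¹ ≤ (1 + Real.log θ)/θ := by
    have hPpos : (0:ℝ) < (2:ℝ)^(θ-1:ℝ) := Real.rpow_pos_of_pos two_pos _
    have hP : (1:ℝ) + (θ-1)*Real.log 2 ≤ (2:ℝ)^(θ-1:ℝ) := by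
      rw [Real.rpow_def_of_pos two_pos]
      calc (1:ℝ) + (θ-1)*Real.log 2 = Real.log 2 * (θ-1) + 1 := by ring
        _ ≤ Real.exp (Real.log 2 * (θ-1)) := Real.add_one_le_exp _
    have hLθ : θ - 1 ≤ Real.log θ * θ := by
      have h := Real.log_le_sub_one_of_pos (show (0:ℝ) < θ⁻¹ by positivity)
      rw [Real.log_inv] at h
      have h2 : 1 - θ⁻¹ ≤ Real.log θ := by linarith only [h]
      have h3 : (1 - θ⁻¹) * θ ≤ Real.log θ * θ := mul_le_mul_of_nonneg_right h2 (le_of_lt hθ0)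
      have h4 : (1 - θ⁻¹) * θ = θ - 1 := by field_simp
      linarith only [h3, h4]
    have hsplit : (2:ℝ)^(θ:ℝ) = 2 * (2:ℝ)^(θ-1:ℝ) := by
      have h5 : (2:ℝ)^((1:ℝ) + (θ-1)) = (2:ℝ)^(1:ℝ) * (2:ℝ)^(θ-1:ℝ) := Real.rpow_add two_pos _ _
      rw [show (1:ℝ) + (θ-1) = θ by ring] at h5
      rw [h5, Real.rpow_one]
    have hlog2 := Real.log_two_gt_d9
    have hlogθ : 0 ≤ Real.log θ := Real.log_nonneg (le_of_lt hθ1)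
    have hkey : θ ≤ (1 + Real.log θ) * (2:ℝ)^(θ-1:ℝ) := by
      have step : (1 + Real.log θ) * ((1:ℝ) + (θ-1)*Real.log 2)
          ≤ (1 + Real.log θ) * (2:ℝ)^(θ-1:ℝ) :=
        mul_le_mul_of_nonneg_left hP (by linarith only [hlogθ])
      have step2 : θ ≤ (1 + Real.log θ) * ((1:ℝ) + (θ-1)*Real.log 2) := by
        have hL2nn : (0:ℝ) ≤ Real.log 2 := Real.log_nonneg one_le_two
        have hs : (0:ℝ) ≤ θ - 1 := by linarith only [hθ1]
        have h1sL2 : (0:ℝ) ≤ 1 + (θ-1)*Real.log 2 := by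
          nlinarith only [mul_nonneg hs hL2nn]
        have hD : (0:ℝ) ≤ Real.log θ * θ - (θ-1) := by linarith only [hLθ]
        have h2L2 : (0:ℝ) ≤ 2*Real.log 2 - 1 := by linarith only [hlog2]
        have hident : θ * ((1 + Real.log θ) * (1 + (θ-1)*Real.log 2) - θ)
            = (θ-1)*(Real.log 2 + (θ-1)*(2*Real.log 2 - 1))
              + (Real.log θ * θ - (θ-1)) * (1 + (θ-1)*Real.log 2) := by ring
        have hrhs : (0:ℝ) ≤ (θ-1)*(Real.log 2 + (θ-1)*(2*Real.log 2 - 1))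
              + (Real.log θ * θ - (θ-1)) * (1 + (θ-1)*Real.log 2) := by
          have t1 : (0:ℝ) ≤ (θ-1)*(Real.log 2 + (θ-1)*(2*Real.log 2 - 1)) :=
            mul_nonneg hs (by nlinarith only [mul_nonneg hs h2L2, hL2nn])
          have t2 : (0:ℝ) ≤ (Real.log θ * θ - (θ-1)) * (1 + (θ-1)*Real.log 2) :=
            mul_nonneg hD h1sL2
          linarith only [t1, t2]
        nlinarith only [hident, hrhs, hθ0]
      linarith only [step, step2]
    rw [hsplit]
    have h6 : (2:ℝ) * (2 * (2:ℝ)^(θ-1:ℝ))⁻¹ = ((2:ℝ)^(θ-1:ℝ))⁻¹ := by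
      field_simp
    rw [h6, inv_eq_one_div, div_le_div_iff₀ hPpos hθ0]
    linarith only [hkey]
  have hfinal : (S.card : ℝ) ≤ (1 + Real.log θ)/θ * (N:ℝ) := by
    calc (S.card : ℝ) ≤ (N:ℝ) * (((l:ℝ)-1)/μ + ((l:ℝ)-1)/(qr - (l:ℝ))) := hScard
      _ ≤ (N:ℝ) * (2 * ((2:ℝ)^(θ:ℝ))⁻¹) := by
          apply mul_le_mul_of_nonneg_left _ (le_of_lt hNr)
          have h8 := add_le_add e1 e2
          have h7 : t⁻¹ + t⁻¹ ≤ 2 * ((2:ℝ)^(θ:ℝ))⁻¹ := by linarith only [e3]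
          linarith only [h7, h8]
      _ ≤ (N:ℝ) * ((1 + Real.log θ)/θ) := mul_le_mul_of_nonneg_left e4 (le_of_lt hNr)
      _ = (1 + Real.log θ)/θ * (N:ℝ) := by ring
  rw [hLHS]
  have hNat : (Nat.card ((Fin n → F) ≃ₗ[F] (Fin n → F)) : ℝ) = (N:ℝ) := by
    rw [hNdef, Nat.card_eq_fintype_card]
  rw [hNat]
  exact hfinal
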